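/- Let $\theta, \theta_\mu \in C^2[0,1]$ satisfy the logistic and linearized equations as above with homogeneous Neumann conditions, $\theta > 0$ non-constant, and suppose $\theta' \geq 0$, $\theta' \not\equiv 0$ on $(0,\eta)$ and $\theta' \leq 0$, $\theta' \not\equiv 0$ on $(\eta,1)$ for some $\eta \in [0,1]$ (so $\eta$ is a global maximum point of $\theta$). If additionally $\theta_\mu'(\eta) \geq 0$ implies (via integration of the Wronskian identity over $[\eta,1]$) that $\int_\eta^1 \theta^2\theta_\mu \le 0$, then $\theta_\mu(\eta) < 0$. -/

import Mathlib

open Set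

/-- Cooperative positivity propagation: if `P` and `Q` start positive at `a` and each has a
positive derivative whenever both are positive, then both stay positive on `[a, b]`. -/
lemma aux_cooperative_pos (a b : ℝ) (hab : a < b) (P Q P' Q' : ℝ → ℝ)
    (hPc : ContinuousOn P (Icc a b)) (hQc : ContinuousOn Q (Icc a b))
    (hdP : ∀ x ∈ Ioo a b, HasDerivAt P (P' x) x)
    (hdQ : ∀ x ∈ Ioo a b, HasDerivAt Q (Q' x) x)
    (hPa : 0 < P a) (hQa : 0 < Q a)
    (hgrow : ∀ x ∈ Ioo a b, 0 < P x → 0 < Q x → 0 < P' x ∧ 0 < Q' x) :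
    ∀ x ∈ Icc a b, 0 < P x ∧ 0 < Q x := by
  by_contra hcon
  push_neg at hcon
  obtain ⟨z, hz, hzbad⟩ := hcon
  set S : Set ℝ := {x | x ∈ Icc a b ∧ (P x ≤ 0 ∨ Q x ≤ 0)} with hSdef
  have hSne : S.Nonempty := by
    refine ⟨z, hz, ?_⟩
    rcases le_or_gt (P z) 0 with h | h
    · exact Or.inl h
    · exact Or.inr (hzbad h)
  have hSclosed : IsClosed S := by
    have h1 : S = (Icc a b ∩ P ⁻¹' Iic 0) ∪ (Icc a b ∩ Q ⁻¹' Iic 0) := by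
      ext x
      simp only [hSdef, mem_setOf_eq, mem_union, mem_inter_iff, mem_preimage, mem_Iic]
      tauto
    rw [h1]
    exact (hPc.preimage_isClosed_of_isClosed isClosed_Icc isClosed_Iic).union
      (hQc.preimage_isClosed_of_isClosed isClosed_Icc isClosed_Iic)
  have hSbdd : BddBelow S := ⟨a, fun x hx => hx.1.1⟩
  set s := sInf S with hs
  have hsS : s ∈ S := hSclosed.csInf_mem hSne hSbdd
  have hsab : s ∈ Icc a b := hsS.1
  have hsa : a < s := by
    rcases hsab.1.lt_or_eq with h | h
    · exact h
    · exfalso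
      rcases hsS.2 with h' | h' <;> rw [← h] at h' <;> linarith
  have hbefore : ∀ y ∈ Ico a s, 0 < P y ∧ 0 < Q y := by
    intro y hy
    by_contra hcy
    push_neg at hcy
    have hyS : y ∈ S := by
      refine ⟨⟨hy.1, hy.2.le.trans hsab.2⟩, ?_⟩
      rcases le_or_gt (P y) 0 with h | h
      · exact Or.inl h
      · exact Or.inr (hcy h)
    exact absurd (csInf_le hSbdd hyS) (not_le.mpr hy.2)
  have hios : Ioo a s ⊆ Ioo a b := Ioo_subset_Ioo le_rfl hsab.2
  have hgrow' : ∀ x ∈ Ioo a s, 0 < P' x ∧ 0 < Q' x := by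
    intro x hx
    have hb := hbefore x ⟨hx.1.le, hx.2⟩
    exact hgrow x (hios hx) hb.1 hb.2
  have hPmono : StrictMonoOn P (Icc a s) := by
    apply strictMonoOn_of_deriv_pos (convex_Icc a s)
      (hPc.mono (Icc_subset_Icc le_rfl hsab.2))
    intro x hx
    rw [interior_Icc] at hx
    rw [(hdP x (hios hx)).deriv]
    exact (hgrow' x hx).1
  have hQmono : StrictMonoOn Q (Icc a s) := by
    apply strictMonoOn_of_deriv_pos (convex_Icc a s)
      (hQc.mono (Icc_subset_Icc le_rfl hsab.2))
    intro x hx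
    rw [interior_Icc] at hx
    rw [(hdQ x (hios hx)).deriv]
    exact (hgrow' x hx).2
  have h1 := hPmono (left_mem_Icc.mpr hsa.le) (right_mem_Icc.mpr hsa.le) hsa
  have h2 := hQmono (left_mem_Icc.mpr hsa.le) (right_mem_Icc.mpr hsa.le) hsa
  rcases hsS.2 with h | h <;> linarith

lemma aux_eps_limit (c e : ℝ) (he : 0 < e) (h : ∀ ε > (0:ℝ), 0 < c + ε * e) : 0 ≤ c := by
  by_contra hc
  push_neg at hc
  have hε : (0:ℝ) < -c / (2 * e) := div_pos (by linarith) (by linarith)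
  have := h _ hε
  have heq : -c / (2 * e) * e = -c / 2 := by field_simp
  rw [heq] at this
  linarith

/-- At a global maximum point `η` of an up-then-down profile `θ`, the μ-derivative
`θ_μ(η)` is strictly negative. -/
theorem theta_mu_neg_at_max (μ : ℝ) (hμ : 0 < μ) (m θ θμ : ℝ → ℝ)
    (hm : ContDiffOn ℝ 1 m (Icc 0 1))
    (hmnonconst : ∃ x ∈ Icc (0:ℝ) 1, ∃ y ∈ Icc (0:ℝ) 1, m x ≠ m y)
    (hθreg : ContDiffOn ℝ 2 θ (Icc 0 1)) (hθμreg : ContDiffOn ℝ 2 θμ (Icc 0 1))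
    (hθpos : ∀ x ∈ Icc (0:ℝ) 1, 0 < θ x)
    (hθnonconst : ∃ x ∈ Icc (0:ℝ) 1, ∃ y ∈ Icc (0:ℝ) 1, θ x ≠ θ y)
    (hode : ∀ x ∈ Ioo (0:ℝ) 1,
      μ * derivWithin (derivWithin θ (Icc 0 1)) (Icc 0 1) x + θ x * (m x - θ x) = 0)
    (hodeμ : ∀ x ∈ Ioo (0:ℝ) 1,
      μ * derivWithin (derivWithin θμ (Icc 0 1)) (Icc 0 1) x + (m x - 2 * θ x) * θμ x
        = -derivWithin (derivWithin θ (Icc 0 1)) (Icc 0 1) x)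
    (hbc0 : derivWithin θ (Icc 0 1) 0 = 0) (hbc1 : derivWithin θ (Icc 0 1) 1 = 0)
    (hbcμ0 : derivWithin θμ (Icc 0 1) 0 = 0) (hbcμ1 : derivWithin θμ (Icc 0 1) 1 = 0)
    (η : ℝ) (hη : η ∈ Icc (0:ℝ) 1)
    (hup : ∀ x ∈ Ioo (0:ℝ) η, 0 ≤ derivWithin θ (Icc 0 1) x)
    (hupne : ∃ x ∈ Ioo (0:ℝ) η, derivWithin θ (Icc 0 1) x ≠ 0)
    (hdown : ∀ x ∈ Ioo η (1:ℝ), derivWithin θ (Icc 0 1) x ≤ 0)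
    (hdownne : ∃ x ∈ Ioo η (1:ℝ), derivWithin θ (Icc 0 1) x ≠ 0)
    (hkey : 0 ≤ derivWithin θμ (Icc 0 1) η →
      (∫ x in η..(1:ℝ), (θ x) ^ 2 * θμ x) ≤ 0) :
    θμ η < 0 := by
  by_contra hcon
  push_neg at hcon
  -- notation
  set θ₁ := derivWithin θ (Icc (0:ℝ) 1) with hθ₁def
  set θ₂ := derivWithin θ₁ (Icc (0:ℝ) 1) with hθ₂def
  set w₁ := derivWithin θμ (Icc (0:ℝ) 1) with hw₁def
  set w₂ := derivWithin w₁ (Icc (0:ℝ) 1) with hw₂def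
  obtain ⟨x₀, hx₀, hx₀ne⟩ := hdownne
  have hη1 : η < 1 := lt_trans hx₀.1 hx₀.2
  have hη0 : (0:ℝ) ≤ η := hη.1
  -- regularity
  have hUD : UniqueDiffOn ℝ (Icc (0:ℝ) 1) := uniqueDiffOn_Icc zero_lt_one
  have hθ1reg : ContDiffOn ℝ 1 θ₁ (Icc 0 1) := hθreg.derivWithin hUD (by norm_num)
  have hw1reg : ContDiffOn ℝ 1 w₁ (Icc 0 1) := hθμreg.derivWithin hUD (by norm_num)
  have hθcont : ContinuousOn θ (Icc (0:ℝ) 1) := hθreg.continuousOn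
  have hwcont : ContinuousOn θμ (Icc (0:ℝ) 1) := hθμreg.continuousOn
  have hθ1cont : ContinuousOn θ₁ (Icc (0:ℝ) 1) := hθ1reg.continuousOn
  have hw1cont : ContinuousOn w₁ (Icc (0:ℝ) 1) := hw1reg.continuousOn
  have hθdiff : DifferentiableOn ℝ θ (Icc (0:ℝ) 1) := hθreg.differentiableOn (by norm_num)
  have hwdiff : DifferentiableOn ℝ θμ (Icc (0:ℝ) 1) := hθμreg.differentiableOn (by norm_num)
  have hθ1diff : DifferentiableOn ℝ θ₁ (Icc (0:ℝ) 1) := hθ1reg.differentiableOn (by norm_num)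
  have hw1diff : DifferentiableOn ℝ w₁ (Icc (0:ℝ) 1) := hw1reg.differentiableOn (by norm_num)
  -- pointwise derivatives at interior points
  have hmem : ∀ x ∈ Ioo (0:ℝ) 1, Icc (0:ℝ) 1 ∈ nhds x := fun x hx => Icc_mem_nhds hx.1 hx.2
  have hDθ : ∀ x ∈ Ioo (0:ℝ) 1, HasDerivAt θ (θ₁ x) x := fun x hx =>
    ((hθdiff x (Ioo_subset_Icc_self hx)).hasDerivWithinAt).hasDerivAt (hmem x hx)
  have hDθ1 : ∀ x ∈ Ioo (0:ℝ) 1, HasDerivAt θ₁ (θ₂ x) x := fun x hx =>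
    ((hθ1diff x (Ioo_subset_Icc_self hx)).hasDerivWithinAt).hasDerivAt (hmem x hx)
  have hDw : ∀ x ∈ Ioo (0:ℝ) 1, HasDerivAt θμ (w₁ x) x := fun x hx =>
    ((hwdiff x (Ioo_subset_Icc_self hx)).hasDerivWithinAt).hasDerivAt (hmem x hx)
  have hDw1 : ∀ x ∈ Ioo (0:ℝ) 1, HasDerivAt w₁ (w₂ x) x := fun x hx =>
    ((hw1diff x (Ioo_subset_Icc_self hx)).hasDerivWithinAt).hasDerivAt (hmem x hx)
  clear_value θ₁ θ₂ w₁ w₂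
  -- the key functional U and the ratio φ
  obtain ⟨U, hUdef⟩ : ∃ f : ℝ → ℝ,
      f = fun x => μ * (θ x * w₁ x - θ₁ x * θμ x) + θ x * θ₁ x := ⟨_, rfl⟩
  obtain ⟨φ, hφdef⟩ : ∃ f : ℝ → ℝ, f = fun x => θμ x / θ x := ⟨_, rfl⟩
  have hUx : ∀ x, U x = μ * (θ x * w₁ x - θ₁ x * θμ x) + θ x * θ₁ x := by
    intro x; rw [hUdef]
  have hφx : ∀ x, φ x = θμ x / θ x := by intro x; rw [hφdef]
  have hUcont : ContinuousOn U (Icc (0:ℝ) 1) := by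
    rw [hUdef]
    exact ((continuousOn_const.mul ((hθcont.mul hw1cont).sub (hθ1cont.mul hwcont))).add
      (hθcont.mul hθ1cont))
  have hφcont : ContinuousOn φ (Icc (0:ℝ) 1) := by
    rw [hφdef]
    exact hwcont.div hθcont (fun x hx => (hθpos x hx).ne')
  have hU0 : U 0 = 0 := by rw [hUx 0, hbc0, hbcμ0]; ring
  have hU1 : U 1 = 0 := by rw [hUx 1, hbc1, hbcμ1]; ring
  -- derivative of U
  have hDU : ∀ x ∈ Ioo (0:ℝ) 1, HasDerivAt U (θ x ^ 2 * θμ x + θ₁ x ^ 2) x := by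
    intro x hx
    have h1 := hDθ x hx
    have h2 := hDθ1 x hx
    have h3 := hDw x hx
    have h4 := hDw1 x hx
    have h5 := (((h1.mul h4).sub (h2.mul h3)).const_mul μ).add (h1.mul h2)
    rw [hUdef]
    refine h5.congr_deriv ?_
    have e1 := hode x hx
    have e2 := hodeμ x hx
    linear_combination θ x * e2 - θμ x * e1
  -- derivative of φ
  have hDφ : ∀ x ∈ Ioo (0:ℝ) 1, HasDerivAt φ
      ((w₁ x * θ x - θμ x * θ₁ x) / θ x ^ 2) x := by
    intro x hx
    rw [hφdef]
    exact (hDw x hx).div (hDθ x hx) (hθpos x (Ioo_subset_Icc_self hx)).ne'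
  -- bounds
  obtain ⟨c, hcI, hcmin⟩ := isCompact_Icc.exists_isMinOn
    (nonempty_Icc.mpr zero_le_one) hθcont
  have hcm : 0 < θ c := hθpos c hcI
  have hcmle : ∀ x ∈ Icc (0:ℝ) 1, θ c ≤ θ x := fun x hx => hcmin hx
  obtain ⟨d, hdI, hdmax⟩ := isCompact_Icc.exists_isMaxOn
    (nonempty_Icc.mpr zero_le_one) hθcont
  have hdle : ∀ x ∈ Icc (0:ℝ) 1, θ x ≤ θ d := fun x hx => hdmax hx
  obtain ⟨B, hBdef⟩ : ∃ b : ℝ, b = θ d ^ 3 := ⟨_, rfl⟩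
  have hBb : ∀ x ∈ Icc (0:ℝ) 1, θ x ^ 3 ≤ B := by
    intro x hx
    rw [hBdef]
    exact pow_le_pow_left₀ (hθpos x hx).le (hdle x hx) 3
  have hBpos : 0 < B := by rw [hBdef]; exact pow_pos (hθpos d hdI) 3
  obtain ⟨K, hKdef⟩ : ∃ k : ℝ, k = B + 1 / (μ * θ c ^ 2) + 1 := ⟨_, rfl⟩
  have hinv : 0 < 1 / (μ * θ c ^ 2) := div_pos one_pos (mul_pos hμ (pow_pos hcm 2))
  have hKB : B + 1 ≤ K := by rw [hKdef]; linarith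
  have hKpos : 0 < K := by rw [hKdef]; linarith
  have hK1 : ∀ x ∈ Icc (0:ℝ) 1, 1 ≤ μ * K * θ x ^ 2 := by
    intro x hx
    have h1 : θ c ≤ θ x := hcmle x hx
    have h2 : μ * (1 / (μ * θ c ^ 2)) * θ c ^ 2 = 1 := by field_simp
    have h3 : θ c ^ 2 ≤ θ x ^ 2 := pow_le_pow_left₀ hcm.le h1 2
    rw [hKdef]
    linarith only [h2, mul_nonneg (mul_nonneg hμ.le hinv.le) (sub_nonneg.mpr h3),
      mul_nonneg (mul_nonneg hμ.le hBpos.le) (pow_pos (hθpos x hx) 2).le,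
      mul_pos hμ (pow_pos (hθpos x hx) 2)]
  have hφη : 0 ≤ φ η := by rw [hφx η]; exact div_nonneg hcon (hθpos η hη).le
  -- membership helpers
  have hsub1 : Ioo η 1 ⊆ Ioo (0:ℝ) 1 := Ioo_subset_Ioo hη0 le_rfl
  have hsub1' : Ioo η 1 ⊆ Icc (0:ℝ) 1 := fun x hx => Ioo_subset_Icc_self (hsub1 hx)
  -- w recovered from φ
  have hwφ : ∀ x ∈ Icc (0:ℝ) 1, 0 ≤ φ x → 0 ≤ θμ x := by
    intro x hx h
    have hθx := hθpos x hx
    rw [hφx x] at h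
    have h2 : θμ x = θμ x / θ x * θ x := by field_simp
    rw [h2]
    exact mul_nonneg h hθx.le
  rcases le_or_gt 0 (U η) with hUη | hUη
  · -- Case 1 : U η ≥ 0, work on [η, 1]
    have hεcase : ∀ ε > (0:ℝ), ∀ x ∈ Icc η 1,
        0 < φ x + ε * Real.exp (K * x) ∧ 0 < U x + ε * Real.exp (K * x) := by
      intro ε hε
      have hexpD : ∀ x : ℝ, HasDerivAt (fun y => ε * Real.exp (K * y))
          (ε * (Real.exp (K * x) * K)) x := by
        intro x
        have h := (((hasDerivAt_id x).const_mul K).exp).const_mul ε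
        simpa using h
      have hexpC : Continuous (fun y : ℝ => ε * Real.exp (K * y)) :=
        continuous_const.mul (Real.continuous_exp.comp (continuous_const.mul continuous_id))
      refine aux_cooperative_pos η 1 hη1
        (fun x => φ x + ε * Real.exp (K * x))
        (fun x => U x + ε * Real.exp (K * x))
        (fun x => (w₁ x * θ x - θμ x * θ₁ x) / θ x ^ 2 + ε * (Real.exp (K * x) * K))
        (fun x => (θ x ^ 2 * θμ x + θ₁ x ^ 2) + ε * (Real.exp (K * x) * K))
        ?_ ?_ ?_ ?_ ?_ ?_ ?_
      · exact (hφcont.mono (Icc_subset_Icc hη0 le_rfl)).add hexpC.continuousOn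
      · exact (hUcont.mono (Icc_subset_Icc hη0 le_rfl)).add hexpC.continuousOn
      · intro x hx
        exact (hDφ x (hsub1 hx)).add (hexpD x)
      · intro x hx
        exact (hDU x (hsub1 hx)).add (hexpD x)
      · show 0 < φ η + ε * Real.exp (K * η)
        linarith only [hφη, mul_pos hε (Real.exp_pos (K * η))]
      · show 0 < U η + ε * Real.exp (K * η)
        linarith only [hUη, mul_pos hε (Real.exp_pos (K * η))]
      · intro x hx hPx hQx
        have hPx' : 0 < φ x + ε * Real.exp (K * x) := hPx
        have hQx' : 0 < U x + ε * Real.exp (K * x) := hQx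
        clear hPx hQx
        have hxI : x ∈ Icc (0:ℝ) 1 := hsub1' hx
        have hθx : 0 < θ x := hθpos x hxI
        have hexp : 0 < Real.exp (K * x) := Real.exp_pos _
        have hθ₁x : θ₁ x ≤ 0 := hdown x hx
        have hKx := hK1 x hxI
        have hBx := hBb x hxI
        constructor
        · -- P' > 0
          show 0 < (w₁ x * θ x - θμ x * θ₁ x) / θ x ^ 2 + ε * (Real.exp (K * x) * K)
          have hMD : μ * (w₁ x * θ x - θμ x * θ₁ x) = U x - θ x * θ₁ x := by
            rw [hUx x]; ring
          have h10 : -(ε * Real.exp (K * x)) < U x - θ x * θ₁ x := by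
            linarith only [hQx', mul_nonpos_of_nonneg_of_nonpos hθx.le hθ₁x]
          have h11 : μ * (-(ε * (Real.exp (K * x) * K)) * θ x ^ 2)
              ≤ -(ε * Real.exp (K * x)) := by
            linarith only [mul_nonneg (mul_pos hε hexp).le (sub_nonneg.mpr hKx)]
          have h12 : -(ε * (Real.exp (K * x) * K)) * θ x ^ 2
              < w₁ x * θ x - θμ x * θ₁ x := by
            have h14 := h11.trans_lt h10
            rw [← hMD] at h14
            exact lt_of_mul_lt_mul_left h14 hμ.le
          have h13 : -(ε * (Real.exp (K * x) * K)) < (w₁ x * θ x - θμ x * θ₁ x) / θ x ^ 2 :=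
            (lt_div_iff₀ (pow_pos hθx 2)).mpr h12
          linarith only [h13]
        · -- Q' > 0
          show 0 < θ x ^ 2 * θμ x + θ₁ x ^ 2 + ε * (Real.exp (K * x) * K)
          have hPd : -(ε * Real.exp (K * x)) * θ x < θμ x := by
            have h : -(ε * Real.exp (K * x)) < θμ x / θ x := by
              rw [hφx x] at hPx'; linarith only [hPx']
            exact (lt_div_iff₀ hθx).mp h
          have h12 : -(ε * Real.exp (K * x)) * θ x ^ 3 < θ x ^ 2 * θμ x := by
            linarith only [mul_lt_mul_of_pos_left hPd (pow_pos hθx 2)]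
          have hKθ : (0:ℝ) ≤ K - 1 - θ x ^ 3 := by linarith only [hBx, hKB]
          have hA : 0 ≤ ε * Real.exp (K * x) * (K - 1 - θ x ^ 3) :=
            mul_nonneg (mul_pos hε hexp).le hKθ
          linarith only [hA, mul_pos hε hexp, sq_nonneg (θ₁ x), h12]
    -- let ε → 0
    have hφpos : ∀ x ∈ Icc η 1, 0 ≤ φ x := by
      intro x hx
      exact aux_eps_limit (φ x) (Real.exp (K * x)) (Real.exp_pos _)
        (fun ε hε => (hεcase ε hε x hx).1)
    -- U is monotone on [η,1]
    have hwnn : ∀ x ∈ Icc η 1, 0 ≤ θμ x := fun x hx =>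
      hwφ x (Icc_subset_Icc hη0 le_rfl hx) (hφpos x hx)
    have hUmono : MonotoneOn U (Icc η 1) := by
      apply monotoneOn_of_deriv_nonneg (convex_Icc η 1)
        (hUcont.mono (Icc_subset_Icc hη0 le_rfl))
      · intro x hx
        rw [interior_Icc] at hx
        exact (hDU x (hsub1 hx)).differentiableAt.differentiableWithinAt
      · intro x hx
        rw [interior_Icc] at hx
        rw [(hDU x (hsub1 hx)).deriv]
        have h1 : 0 ≤ θμ x := hwnn x (Ioo_subset_Icc_self hx)
        exact add_nonneg (mul_nonneg (sq_nonneg _) h1) (sq_nonneg _)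
    have hUzero : ∀ x ∈ Icc η 1, U x = 0 := by
      intro x hx
      have h1 : U η ≤ U x := hUmono (left_mem_Icc.mpr hη1.le) hx hx.1
      have h2 : U x ≤ U 1 := hUmono hx (right_mem_Icc.mpr hη1.le) hx.2
      rw [hU1] at h2
      linarith
    -- contradiction at x₀
    have hU0near : U =ᶠ[nhds x₀] (fun _ => (0:ℝ)) := by
      have hmem0 : Icc η 1 ∈ nhds x₀ := Icc_mem_nhds hx₀.1 hx₀.2
      filter_upwards [hmem0] with y hy
      exact hUzero y hy
    have hD0 : HasDerivAt U 0 x₀ := by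
      exact (hasDerivAt_const x₀ (0:ℝ)).congr_of_eventuallyEq hU0near
    have hDx₀ := (hDU x₀ (hsub1 hx₀)).unique hD0
    have hw0 : 0 ≤ θμ x₀ := hwnn x₀ (Ioo_subset_Icc_self hx₀)
    have hsq : 0 < θ₁ x₀ ^ 2 :=
      lt_of_le_of_ne (sq_nonneg _) (Ne.symm (pow_ne_zero 2 hx₀ne))
    have hprod : 0 ≤ θ x₀ ^ 2 * θμ x₀ :=
      mul_nonneg (pow_pos (hθpos x₀ (hsub1' hx₀)) 2).le hw0
    linarith
  · -- Case 2 : U η < 0, work on [0, η] via reflection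
    have hηpos : 0 < η := by
      rcases hη0.lt_or_eq with h | h
      · exact h
      · exfalso; rw [← h, hU0] at hUη; exact lt_irrefl 0 hUη
    have hsub2 : ∀ t ∈ Ioo (0:ℝ) η, η - t ∈ Ioo (0:ℝ) 1 := by
      intro t ht
      constructor
      · linarith [ht.2]
      · have := hη.2; linarith [ht.1]
    have hmaps : ∀ t ∈ Icc (0:ℝ) η, η - t ∈ Icc (0:ℝ) 1 := by
      intro t ht
      have := hη.2
      constructor
      · linarith [ht.2]
      · linarith [ht.1]
    have hinner : ∀ t : ℝ, HasDerivAt (fun y => η - y) (-1 : ℝ) t := fun t => by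
      simpa using (hasDerivAt_id t).const_sub η
    have hεcase : ∀ ε > (0:ℝ), ∀ t ∈ Icc 0 η,
        0 < φ (η - t) + ε * Real.exp (K * t) ∧ 0 < -U (η - t) + ε * Real.exp (K * t) := by
      intro ε hε
      have hexpD : ∀ t : ℝ, HasDerivAt (fun y => ε * Real.exp (K * y))
          (ε * (Real.exp (K * t) * K)) t := by
        intro t
        have h := (((hasDerivAt_id t).const_mul K).exp).const_mul ε
        simpa using h
      have hexpC : Continuous (fun y : ℝ => ε * Real.exp (K * y)) :=
        continuous_const.mul (Real.continuous_exp.comp (continuous_const.mul continuous_id))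
      have hreflC : Continuous (fun t : ℝ => η - t) := continuous_const.sub continuous_id
      refine aux_cooperative_pos 0 η hηpos
        (fun t => φ (η - t) + ε * Real.exp (K * t))
        (fun t => -U (η - t) + ε * Real.exp (K * t))
        (fun t => ((w₁ (η - t) * θ (η - t) - θμ (η - t) * θ₁ (η - t)) / θ (η - t) ^ 2) * (-1)
          + ε * (Real.exp (K * t) * K))
        (fun t => (θ (η - t) ^ 2 * θμ (η - t) + θ₁ (η - t) ^ 2)
          + ε * (Real.exp (K * t) * K))
        ?_ ?_ ?_ ?_ ?_ ?_ ?_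
      · exact (hφcont.comp hreflC.continuousOn (fun t ht => hmaps t ht)).add
          hexpC.continuousOn
      · exact ((hUcont.comp hreflC.continuousOn (fun t ht => hmaps t ht)).neg).add
          hexpC.continuousOn
      · intro t ht
        have hx := hsub2 t ht
        have h := (hDφ (η - t) hx).comp t (hinner t)
        exact (h.congr_deriv rfl).add (hexpD t)
      · intro t ht
        have hx := hsub2 t ht
        have h := ((hDU (η - t) hx).comp t (hinner t)).neg
        have h2 : -((θ (η - t) ^ 2 * θμ (η - t) + θ₁ (η - t) ^ 2) * (-1))
            = θ (η - t) ^ 2 * θμ (η - t) + θ₁ (η - t) ^ 2 := by ring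
        rw [h2] at h
        exact h.add (hexpD t)
      · show 0 < φ (η - 0) + ε * Real.exp (K * 0)
        rw [sub_zero]
        linarith only [hφη, mul_pos hε (Real.exp_pos (K * 0))]
      · show 0 < -U (η - 0) + ε * Real.exp (K * 0)
        rw [sub_zero]
        linarith only [hUη, mul_pos hε (Real.exp_pos (K * 0))]
      · intro t ht hPt hQt
        have hPt' : 0 < φ (η - t) + ε * Real.exp (K * t) := hPt
        have hQt' : 0 < -U (η - t) + ε * Real.exp (K * t) := hQt
        clear hPt hQt
        set x := η - t with hxdef
        have hx : x ∈ Ioo (0:ℝ) 1 := hsub2 t ht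
        have hxI : x ∈ Icc (0:ℝ) 1 := Ioo_subset_Icc_self hx
        have hθx : 0 < θ x := hθpos x hxI
        have hexp : 0 < Real.exp (K * t) := Real.exp_pos _
        have hθ₁x : 0 ≤ θ₁ x := hup x ⟨hx.1, by simp only [hxdef]; linarith [ht.1]⟩
        have hKx := hK1 x hxI
        have hBx := hBb x hxI
        constructor
        · -- P' > 0
          show 0 < (w₁ x * θ x - θμ x * θ₁ x) / θ x ^ 2 * (-1) + ε * (Real.exp (K * t) * K)
          have hMD : μ * (w₁ x * θ x - θμ x * θ₁ x) = U x - θ x * θ₁ x := by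
            rw [hUx x]; ring
          have h10 : U x - θ x * θ₁ x < ε * Real.exp (K * t) := by
            linarith only [hQt', mul_nonneg hθx.le hθ₁x]
          have h11 : ε * Real.exp (K * t)
              ≤ μ * ((ε * (Real.exp (K * t) * K)) * θ x ^ 2) := by
            linarith only [mul_nonneg (mul_pos hε hexp).le (sub_nonneg.mpr hKx)]
          have h12 : w₁ x * θ x - θμ x * θ₁ x < (ε * (Real.exp (K * t) * K)) * θ x ^ 2 := by
            have h14 := h10.trans_le h11
            rw [← hMD] at h14
            exact lt_of_mul_lt_mul_left h14 hμ.le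
          have h13 : (w₁ x * θ x - θμ x * θ₁ x) / θ x ^ 2 < ε * (Real.exp (K * t) * K) :=
            (div_lt_iff₀ (pow_pos hθx 2)).mpr h12
          linarith only [h13]
        · -- Q' > 0
          show 0 < θ x ^ 2 * θμ x + θ₁ x ^ 2 + ε * (Real.exp (K * t) * K)
          have hPd : -(ε * Real.exp (K * t)) * θ x < θμ x := by
            have h : -(ε * Real.exp (K * t)) < θμ x / θ x := by
              rw [hφx x] at hPt'; linarith only [hPt']
            exact (lt_div_iff₀ hθx).mp h
          have h12 : -(ε * Real.exp (K * t)) * θ x ^ 3 < θ x ^ 2 * θμ x := by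
            linarith only [mul_lt_mul_of_pos_left hPd (pow_pos hθx 2)]
          have hKθ : (0:ℝ) ≤ K - 1 - θ x ^ 3 := by linarith only [hBx, hKB]
          have hA : 0 ≤ ε * Real.exp (K * t) * (K - 1 - θ x ^ 3) :=
            mul_nonneg (mul_pos hε hexp).le hKθ
          linarith only [hA, mul_pos hε hexp, sq_nonneg (θ₁ x), h12]
    -- let ε → 0 : φ ≥ 0 on [0, η]
    have hφpos : ∀ x ∈ Icc (0:ℝ) η, 0 ≤ φ x := by
      intro x hx
      have hxt : η - x ∈ Icc (0:ℝ) η := ⟨by linarith [hx.2], by linarith [hx.1]⟩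
      have := aux_eps_limit (φ x) (Real.exp (K * (η - x))) (Real.exp_pos _)
        (fun ε hε => by
          have h := (hεcase ε hε (η - x) hxt).1
          simpa using h)
      exact this
    have hwnn : ∀ x ∈ Icc (0:ℝ) η, 0 ≤ θμ x := fun x hx =>
      hwφ x (Icc_subset_Icc le_rfl hη.2 hx) (hφpos x hx)
    have hsub3 : Ioo (0:ℝ) η ⊆ Ioo (0:ℝ) 1 := Ioo_subset_Ioo le_rfl hη.2
    have hUmono : MonotoneOn U (Icc (0:ℝ) η) := by
      apply monotoneOn_of_deriv_nonneg (convex_Icc (0:ℝ) η)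
        (hUcont.mono (Icc_subset_Icc le_rfl hη.2))
      · intro x hx
        rw [interior_Icc] at hx
        exact (hDU x (hsub3 hx)).differentiableAt.differentiableWithinAt
      · intro x hx
        rw [interior_Icc] at hx
        rw [(hDU x (hsub3 hx)).deriv]
        have h1 : 0 ≤ θμ x := hwnn x (Ioo_subset_Icc_self hx)
        exact add_nonneg (mul_nonneg (sq_nonneg _) h1) (sq_nonneg _)
    have := hUmono (left_mem_Icc.mpr hηpos.le) (right_mem_Icc.mpr hηpos.le) hηpos.le
    rw [hU0] at this
    linarith
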